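/- Let e₁,…,e_n,f₁,…,f_n be a hyperbolic basis of (V,q) (i.e. (eᵢ|e_j)=(fᵢ|f_j)=0, (eᵢ|f_j)=δᵢⱼ), E the span of the eᵢ, and identify the spin representation Cl(V)f with ⋀E via ω ↦ ωf. Then under this identification, the action of v ∈ E ⊆ Cl(V) on ⋀E is the outer product o(v), and the action of v ∈ F ⊆ Cl(V) is twice the inner product 2ι(v). -/

import Mathlib

open CliffordAlgebra

/-- The bilinear form `(v|w) = ½(q(v+w) − q(v) − q(w))` associated to `q`. -/
noncomputable def halfPolar {K V : Type*} [Field K] [CharZero K] [AddCommGroup V] [Module K V]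
    (q : QuadraticForm K V) : V →ₗ[K] Module.Dual K V :=
  (2⁻¹ : K) • (QuadraticMap.polarBilin q)


lemma halfPolar_apply {K V : Type*} [Field K] [CharZero K] [AddCommGroup V] [Module K V]
    (q : QuadraticForm K V) (v w : V) :
    halfPolar q v w = (2⁻¹ : K) * QuadraticMap.polar q v w := by
  simp [halfPolar]

lemma iota_mul_prod_zero {K V : Type*} [Field K] [CharZero K] [AddCommGroup V] [Module K V]
    (q : QuadraticForm K V) :
    ∀ (l : List V) (w : V), w ∈ l → (∀ x ∈ l, QuadraticMap.polar q w x = 0) → q w = 0 →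
      ι q w * (l.map (ι q)).prod = 0 := by
  intro l
  induction l with
  | nil => intro w hw; simp at hw
  | cons a t ih =>
    intro w hw hpol hq
    rcases List.mem_cons.mp hw with h | h
    · subst h
      rw [List.map_cons, List.prod_cons, ← mul_assoc, ι_sq_scalar, hq]
      simp
    · have ha : ι q w * ι q a = - (ι q a * ι q w) := by
        have := ι_mul_ι_add_swap (Q := q) w a
        rw [hpol a List.mem_cons_self] at this
        simp at this
        linear_combination (norm := noncomm_ring) this
      rw [List.map_cons, List.prod_cons, ← mul_assoc, ha, neg_mul, mul_assoc,
        ih w h (fun x hx => hpol x (List.mem_cons_of_mem a hx)) hq]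
      simp

lemma key_lemma {K V : Type*} [Field K] [CharZero K] [AddCommGroup V] [Module K V]
    (q : QuadraticForm K V) (Pf : CliffordAlgebra q) (w : V) (hw : ι q w * Pf = 0) :
    ∀ (k : ℕ) (g : Fin k → V),
      ι q w * (((List.ofFn g).map (ι q)).prod * Pf)
        = ∑ j : Fin k, ((-1 : K) ^ (j : ℕ) * QuadraticMap.polar q w (g j)) •
            ((((List.ofFn g).eraseIdx (j : ℕ)).map (ι q)).prod * Pf) := by
  intro k
  induction k with
  | zero => intro g; simp [hw]
  | succ m ih =>
    intro g
    have ih' := ih (fun i => g i.succ)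
    rw [List.ofFn_succ, Fin.sum_univ_succ]
    simp only [List.map_cons, List.prod_cons, Fin.val_zero, Fin.val_succ,
      List.eraseIdx_cons_zero, List.eraseIdx_cons_succ, pow_zero, one_mul]
    rw [mul_assoc (ι q (g 0)), ← mul_assoc (ι q w)]
    have hcomm : ι q w * ι q (g 0)
        = algebraMap K _ (QuadraticMap.polar q w (g 0)) - ι q (g 0) * ι q w := by
      linear_combination (norm := noncomm_ring) ι_mul_ι_add_swap (Q := q) w (g 0)
    rw [hcomm, sub_mul, mul_assoc, ih', Finset.mul_sum, ← Algebra.smul_def, sub_eq_add_neg]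
    congr 1
    rw [← Finset.sum_neg_distrib]
    apply Finset.sum_congr rfl
    intro j _
    rw [mul_smul_comm, ← mul_assoc, ← neg_smul]
    congr 1
    ring

/-- let `e₁,…,e_n,f₁,…,f_n` be a hyperbolic basis of `(V,q)`, `E` the span
of the `eᵢ`, and identify the spin representation `Cl(V)f` with `⋀E` via `ω ↦ ωf`.
Under this identification the action of `v ∈ E ⊆ Cl(V)` is the outer product `o(v)`,
and the action of `w ∈ F ⊆ Cl(V)` is twice the inner product `2ι(w)`:  on a wedge
`g₁∧⋯∧g_k` of vectors of `E`,
`w · (g₁⋯g_k f) = Σⱼ (−1)^{j-1} 2(w|gⱼ) (g₁⋯ĝⱼ⋯g_k) f`. -/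
theorem stmt5 {K V : Type*} [Field K] [IsAlgClosed K] [CharZero K]
    [AddCommGroup V] [Module K V] [FiniteDimensional K V]
    (q : QuadraticForm K V) (n : ℕ)
    (hdim : Module.finrank K V = 2 * n)
    (e f : Fin n → V)
    (hee : ∀ i j, halfPolar q (e i) (e j) = 0)
    (hff : ∀ i j, halfPolar q (f i) (f j) = 0)
    (hef : ∀ i j, halfPolar q (e i) (f j) = if i = j then 1 else 0) :
    -- the action of `v ∈ E` is the outer product `o(v)`
    (∀ v ∈ Submodule.span K (Set.range e), ∀ x : CliffordAlgebra q,
      ι q v * (x * ((List.ofFn f).map (ι q)).prod)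
        = (ι q v * x) * ((List.ofFn f).map (ι q)).prod) ∧
    -- the action of `w ∈ F` is twice the inner product `2ι(w)`
    (∀ w ∈ Submodule.span K (Set.range f), ∀ (k : ℕ) (g : Fin k → V),
      (∀ j, g j ∈ Submodule.span K (Set.range e)) →
      ι q w * (((List.ofFn g).map (ι q)).prod * ((List.ofFn f).map (ι q)).prod)
        = ∑ j : Fin k, ((-1 : K) ^ (j : ℕ) * (2 * halfPolar q w (g j))) •
            ((((List.ofFn g).eraseIdx (j : ℕ)).map (ι q)).prod
              * ((List.ofFn f).map (ι q)).prod)) := by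
  have hpolff : ∀ i j, QuadraticMap.polar q (f i) (f j) = 0 := by
    intro i j
    have := hff i j
    rw [halfPolar_apply] at this
    have h2 : (2⁻¹ : K) ≠ 0 := inv_ne_zero two_ne_zero
    exact (mul_eq_zero.mp this).resolve_left h2
  have hqf : ∀ i, q (f i) = 0 := by
    intro i
    have := QuadraticMap.polar_self q (f i)
    rw [hpolff i i, two_smul] at this
    exact add_self_eq_zero.mp this.symm
  constructor
  · intro v _ x
    exact (mul_assoc _ _ _).symm
  · intro w hw k g _
    have hw0 : ι q w * ((List.ofFn f).map (ι q)).prod = 0 := by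
      induction hw using Submodule.span_induction with
      | mem x hx =>
        obtain ⟨i, rfl⟩ := hx
        apply iota_mul_prod_zero q (List.ofFn f) (f i)
        · exact List.mem_ofFn.mpr ⟨i, rfl⟩
        · intro x hx
          obtain ⟨j, rfl⟩ := List.mem_ofFn.mp hx
          exact hpolff i j
        · exact hqf i
      | zero => simp
      | add x y _ _ hx hy => rw [map_add, add_mul, hx, hy, add_zero]
      | smul c x _ hx => rw [map_smul, smul_mul_assoc, hx, smul_zero]
    rw [key_lemma q _ w hw0 k g]
    apply Finset.sum_congr rfl
    intro j _
    congr 1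
    rw [halfPolar_apply, ← mul_assoc 2, mul_inv_cancel₀ (two_ne_zero), one_mul]
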